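/- Let g(α) = φ(Φ^{-1}(1−α)). For all α, Δ > 0 with α + Δ < 0.05 and Δ ≤ 4α: (1/2)·Δ·Φ^{-1}(1−α) ≤ g(α + Δ) − g(α) ≤ Δ·Φ^{-1}(1−α). -/

import Mathlib

noncomputable def phi (x : ℝ) : ℝ := (Real.sqrt (2 * Real.pi))⁻¹ * Real.exp (-x ^ 2 / 2)

noncomputable def Phi (t : ℝ) : ℝ := ∫ z in Set.Iic t, phi z

/-- The standard normal quantile function. -/
noncomputable def Phiinv (p : ℝ) : ℝ := sInf {t : ℝ | p ≤ Phi t}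

open MeasureTheory Set Filter Topology

lemma sqrt_two_pi_pos : 0 < Real.sqrt (2 * Real.pi) :=
  Real.sqrt_pos.2 (by positivity)

lemma phi_pos (x : ℝ) : 0 < phi x := by
  unfold phi; positivity

lemma phi_eq (x : ℝ) : phi x = (Real.sqrt (2 * Real.pi))⁻¹ * Real.exp (-(1/2) * x ^ 2) := by
  unfold phi; ring_nf

lemma phi_cont : Continuous phi := by
  unfold phi; continuity

lemma phi_integrable : Integrable phi := by
  have := (integrable_exp_neg_mul_sq (by norm_num : (0:ℝ) < 1/2)).const_mul
    (Real.sqrt (2 * Real.pi))⁻¹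
  refine this.congr (ae_of_all _ fun x => ?_)
  rw [phi_eq]

lemma phi_integral : ∫ x, phi x = 1 := by
  have h := integral_gaussian (1/2 : ℝ)
  have : ∫ x, phi x = (Real.sqrt (2 * Real.pi))⁻¹ * ∫ x, Real.exp (-(1/2) * x ^ 2) := by
    rw [← integral_const_mul]
    congr 1; ext x; rw [phi_eq]
  rw [this, h]
  rw [show Real.pi / (1/2) = 2 * Real.pi by ring]
  exact inv_mul_cancel₀ (ne_of_gt sqrt_two_pi_pos)

lemma phi_hasDeriv (x : ℝ) : HasDerivAt phi (-(x * phi x)) x := by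
  have h1 : HasDerivAt (fun x : ℝ => -x ^ 2 / 2) (-x) x := by
    have := ((hasDerivAt_pow 2 x).neg).div_const 2
    simpa using this.congr_deriv (by ring)
  have h2 := (h1.exp).const_mul (Real.sqrt (2 * Real.pi))⁻¹
  refine h2.congr_deriv ?_
  unfold phi; ring

lemma phi_anti {a b : ℝ} (ha : 0 ≤ a) (hab : a ≤ b) : phi b ≤ phi a := by
  unfold phi
  have h : a ^ 2 ≤ b ^ 2 := by nlinarith
  have := Real.exp_le_exp.2 (by linarith : -b ^ 2 / 2 ≤ -a ^ 2 / 2)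
  have h0 := (inv_nonneg (a := Real.sqrt (2 * Real.pi))).2 sqrt_two_pi_pos.le
  nlinarith

lemma phi_tendsto : Tendsto phi atTop (𝓝 0) := by
  have h1 : Tendsto (fun x : ℝ => -x ^ 2 / 2) atTop atBot := by
    apply Tendsto.atBot_div_const (by norm_num)
    exact tendsto_neg_atTop_atBot.comp (tendsto_pow_atTop (by norm_num))
  have h2 := (Real.tendsto_exp_atBot.comp h1).const_mul (Real.sqrt (2 * Real.pi))⁻¹
  rw [mul_zero] at h2
  exact h2.congr (fun x => rfl)

lemma xphi_tendsto : Tendsto (fun t => t * phi t) atTop (𝓝 0) := by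
  have h := Real.tendsto_pow_mul_exp_neg_atTop_nhds_zero 1
  refine tendsto_of_tendsto_of_tendsto_of_le_of_le' tendsto_const_nhds h ?_ ?_
  · filter_upwards [eventually_ge_atTop (0:ℝ)] with x hx
    exact mul_nonneg hx (phi_pos x).le
  · filter_upwards [eventually_ge_atTop (2:ℝ)] with x hx
    have h1 : phi x ≤ Real.exp (-x) := by
      unfold phi
      have hs : (1:ℝ) ≤ Real.sqrt (2 * Real.pi) := by
        rw [show (1:ℝ) = Real.sqrt 1 by simp]
        exact Real.sqrt_le_sqrt (by nlinarith [Real.pi_gt_three])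
      have he : Real.exp (-x ^ 2 / 2) ≤ Real.exp (-x) := by
        apply Real.exp_le_exp.2; nlinarith
      calc (Real.sqrt (2 * Real.pi))⁻¹ * Real.exp (-x ^ 2 / 2)
          ≤ 1 * Real.exp (-x ^ 2 / 2) := by
            apply mul_le_mul_of_nonneg_right _ (Real.exp_pos _).le
            exact inv_le_one_of_one_le₀ hs
        _ ≤ Real.exp (-x) := by rw [one_mul]; exact he
    calc x * phi x ≤ x * Real.exp (-x) := by
          apply mul_le_mul_of_nonneg_left h1 (by linarith)
      _ = x ^ 1 * Real.exp (-x) := by ring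

lemma tail_integrand_integrable {c : ℝ} :
    IntegrableOn (fun z => z * phi z) (Ioi c) := by
  have := (integrable_mul_exp_neg_mul_sq (by norm_num : (0:ℝ) < 1/2)).const_mul
    (Real.sqrt (2 * Real.pi))⁻¹
  refine (this.congr (ae_of_all _ fun x => ?_)).integrableOn
  rw [phi_eq]; ring

/-- ∫_{Ioi c} z φ(z) dz = φ(c) -/
lemma tail_moment (c : ℝ) : ∫ z in Ioi c, z * phi z = phi c := by
  have h := integral_Ioi_of_hasDerivAt_of_tendsto' (f := fun t => -phi t)
    (f' := fun t => t * phi t) (a := c) (m := 0)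
    (fun x _ => by have := (phi_hasDeriv x).neg; rw [neg_neg] at this; exact this)
    tail_integrand_integrable
    (by simpa using phi_tendsto.neg)
  simpa using h

lemma Phi_sub {a b : ℝ} : Phi b - Phi a = ∫ t in a..b, phi t := by
  unfold Phi
  exact intervalIntegral.integral_Iic_sub_Iic phi_integrable.integrableOn
    phi_integrable.integrableOn

lemma Phi_strictMono : StrictMono Phi := by
  intro a b hab
  have h : 0 < ∫ t in a..b, phi t :=
    intervalIntegral.intervalIntegral_pos_of_pos
      (phi_integrable.intervalIntegrable) phi_pos hab
  have := Phi_sub (a := a) (b := b)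
  linarith

lemma Phi_add_tail (t : ℝ) : Phi t + ∫ z in Ioi t, phi z = 1 := by
  rw [← phi_integral]
  unfold Phi
  rw [← setIntegral_union (Iic_disjoint_Ioi le_rfl) measurableSet_Ioi
    phi_integrable.integrableOn phi_integrable.integrableOn, Iic_union_Ioi]
  simp

lemma tail_nonneg (t : ℝ) : 0 ≤ ∫ z in Ioi t, phi z :=
  setIntegral_nonneg measurableSet_Ioi (fun x _ => (phi_pos x).le)

/-- Upper tail bound: `∫_{Ioi t} φ ≤ φ(t)/t` for `t > 0`. -/
lemma tail_ub {t : ℝ} (ht : 0 < t) : ∫ z in Ioi t, phi z ≤ phi t / t := by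
  have h1 : ∫ z in Ioi t, phi z ≤ ∫ z in Ioi t, (z / t) * phi z := by
    apply setIntegral_mono_on phi_integrable.integrableOn
    · exact (tail_integrand_integrable.div_const t).congr
        (ae_of_all _ fun z => by ring)
    · exact measurableSet_Ioi
    · intro z hz
      have hz1 : 1 ≤ z / t := (one_le_div ht).2 (le_of_lt hz)
      nlinarith [phi_pos z]
  have h2 : ∫ z in Ioi t, (z / t) * phi z = phi t / t := by
    rw [show (fun z => (z / t) * phi z) = fun z => (1/t) * (z * phi z) by ext z; ring]
    rw [integral_const_mul, tail_moment]
    ring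
  linarith

/-- Lower tail bound: `t φ(t)/(1+t²) ≤ ∫_{Ioi t} φ`. -/
lemma tail_lb {t : ℝ} (ht : 0 ≤ t) : t * phi t / (1 + t ^ 2) ≤ ∫ z in Ioi t, phi z := by
  -- f z = z * phi z / (1 + z^2), f' z = -(phi z * (1 - 2/(1+z^2)^2))
  set g : ℝ → ℝ := fun z => phi z * (1 - 2 / (1 + z ^ 2) ^ 2) with hg
  have hderiv : ∀ z : ℝ, HasDerivAt (fun w => -(w * phi w / (1 + w ^ 2))) (g z) z := by
    intro z
    have h1 := (hasDerivAt_id z).mul (phi_hasDeriv z)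
    simp only [id_eq, one_mul] at h1
    have h2 : HasDerivAt (fun w : ℝ => 1 + w ^ 2) (2 * z) z := by
      have := (hasDerivAt_pow 2 z).const_add 1
      simpa using this
    have hne : (1 : ℝ) + z ^ 2 ≠ 0 := by positivity
    have h3 := (h1.div h2 hne).neg
    refine h3.congr_deriv ?_
    rw [hg]
    field_simp
    simp only [Pi.mul_apply, id_eq]
    ring
  have hint : IntegrableOn g (Ioi t) := by
    have hcontg : Continuous g := phi_cont.mul (continuous_const.sub
      (continuous_const.div (by continuity) (fun x => by positivity)))
    apply Integrable.mono' phi_integrable.integrableOn hcontg.aestronglyMeasurable.restrict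
    refine ae_of_all _ fun z => ?_
    have h1 : 0 < (1 + z ^ 2) ^ 2 := by positivity
    have h2 : 0 < 2 / (1 + z ^ 2) ^ 2 := by positivity
    have h3 : 2 / (1 + z ^ 2) ^ 2 ≤ 2 := by
      rw [div_le_iff₀ h1]; nlinarith
    rw [Real.norm_eq_abs, abs_mul, abs_of_pos (phi_pos z)]
    have : |1 - 2 / (1 + z ^ 2) ^ 2| ≤ 1 := by
      rw [abs_le]; constructor <;> nlinarith
    nlinarith [phi_pos z]
  have htend : Tendsto (fun w => -(w * phi w / (1 + w ^ 2))) atTop (𝓝 0) := by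
    have h0 : Tendsto (fun w => w * phi w) atTop (𝓝 0) := xphi_tendsto
    refine tendsto_of_tendsto_of_tendsto_of_le_of_le'
      (by simpa using h0.neg : Tendsto (fun w => -(w * phi w)) atTop (𝓝 0))
      tendsto_const_nhds ?_ ?_
    · filter_upwards [eventually_ge_atTop (0:ℝ)] with w hw
      have h1 : 0 < 1 + w ^ 2 := by positivity
      have h2 : 0 ≤ w * phi w := mul_nonneg hw (phi_pos w).le
      have : w * phi w / (1 + w ^ 2) ≤ w * phi w := by
        rw [div_le_iff₀ h1]; nlinarith
      linarith
    · filter_upwards [eventually_ge_atTop (0:ℝ)] with w hw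
      have h2 : 0 ≤ w * phi w := mul_nonneg hw (phi_pos w).le
      have : 0 ≤ w * phi w / (1 + w ^ 2) := by positivity
      linarith
  have key := integral_Ioi_of_hasDerivAt_of_tendsto' (a := t) (m := 0)
    (fun z _ => hderiv z) hint htend
  have h4 : ∫ z in Ioi t, g z = t * phi t / (1 + t ^ 2) := by
    rw [key]; ring
  have h5 : ∫ z in Ioi t, g z ≤ ∫ z in Ioi t, phi z := by
    apply setIntegral_mono_on hint phi_integrable.integrableOn measurableSet_Ioi
    intro z hz
    simp only [hg]
    have h2 : 0 < 2 / (1 + z ^ 2) ^ 2 := by positivity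
    nlinarith [phi_pos z]
  linarith

lemma Phi_cont : Continuous Phi := by
  have h : Continuous (fun t => Phi 0 + ∫ x in (0:ℝ)..t, phi x) :=
    continuous_const.add (intervalIntegral.continuous_primitive
      (fun a b => phi_integrable.intervalIntegrable) 0)
  refine h.congr (fun t => ?_)
  have := Phi_sub (a := (0:ℝ)) (b := t)
  linarith

lemma Phiinv_eq {p t : ℝ} (h : Phi t = p) : Phiinv p = t := by
  unfold Phiinv
  have : {s : ℝ | p ≤ Phi s} = Ici t := by
    ext s
    simp only [mem_setOf_eq, mem_Ici, ← h]
    exact ⟨fun hs => (Phi_strictMono.le_iff_le).1 hs, fun hs => Phi_strictMono.monotone hs⟩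
  rw [this, csInf_Ici]

/-- Numeric bound: `0.05 ≤ ∫_{Ioi 1.415} φ`. -/
lemma tail_num : (0.05 : ℝ) ≤ ∫ z in Ioi (1.415 : ℝ), phi z := by
  have c2 : ((1.415 : ℝ)) ^ 2 = 2.002225 := by norm_num
  refine le_trans ?_ (tail_lb (t := 1.415) (by norm_num))
  -- need: 0.05 ≤ 1.415 * phi 1.415 / (1 + 2.002225)
  have hS : Real.sqrt (2 * Real.pi) ≤ 2.5067 := by
    rw [show (2.5067 : ℝ) = Real.sqrt (2.5067 ^ 2) by
      rw [Real.sqrt_sq (by norm_num)]]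
    exact Real.sqrt_le_sqrt (by nlinarith [Real.pi_lt_d6])
  -- exp lower bound: exp (-(1.0011125)) ≥ (1 - 1.0011125/4)^4
  have hexp : (0.3159 : ℝ) ≤ Real.exp (-(1.415:ℝ) ^ 2 / 2) := by
    have h4 : Real.exp (-(1.415:ℝ) ^ 2 / 2) = (Real.exp (-(1.415:ℝ) ^ 2 / 8)) ^ 4 := by
      rw [← Real.exp_nat_mul]; norm_num
    have hb : (1 : ℝ) + -(1.415:ℝ) ^ 2 / 8 ≤ Real.exp (-(1.415:ℝ) ^ 2 / 8) := by
      have := Real.add_one_le_exp (-(1.415:ℝ) ^ 2 / 8)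
      linarith
    have hbp : (0:ℝ) ≤ 1 + -(1.415:ℝ) ^ 2 / 8 := by norm_num
    rw [h4]
    calc (0.3159 : ℝ) ≤ (1 + -(1.415:ℝ) ^ 2 / 8) ^ 4 := by norm_num
      _ ≤ (Real.exp (-(1.415:ℝ) ^ 2 / 8)) ^ 4 := by
          apply pow_le_pow_left₀ hbp hb
  have hphi : (0.3159 : ℝ) / 2.5067 ≤ phi 1.415 := by
    unfold phi
    have h1 : (0:ℝ) < Real.sqrt (2 * Real.pi) := sqrt_two_pi_pos
    have h2 : (2.5067:ℝ)⁻¹ ≤ (Real.sqrt (2 * Real.pi))⁻¹ := by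
      apply inv_anti₀ h1 hS
    have h3 : (0:ℝ) < (2.5067:ℝ)⁻¹ := by norm_num
    rw [div_eq_mul_inv]
    nlinarith [Real.exp_pos (-(1.415:ℝ) ^ 2 / 2)]
  calc (0.05 : ℝ) ≤ 1.415 * (0.3159 / 2.5067) / (1 + 1.415 ^ 2) := by norm_num
    _ ≤ 1.415 * phi 1.415 / (1 + 1.415 ^ 2) := by gcongr

lemma phi_le_one (t : ℝ) : phi t ≤ 1 := by
  unfold phi
  have hs : (1:ℝ) ≤ Real.sqrt (2 * Real.pi) := by
    rw [show (1:ℝ) = Real.sqrt 1 by simp]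
    exact Real.sqrt_le_sqrt (by nlinarith [Real.pi_gt_three])
  have h1 : (Real.sqrt (2 * Real.pi))⁻¹ ≤ 1 := inv_le_one_of_one_le₀ hs
  have h2 : Real.exp (-t ^ 2 / 2) ≤ 1 := by
    rw [Real.exp_le_one_iff]
    nlinarith [sq_nonneg t]
  nlinarith [Real.exp_pos (-t ^ 2 / 2), sqrt_two_pi_pos]

lemma Phi_zero_le : Phi 0 ≤ 0.95 := by
  have h1 := Phi_add_tail 0
  have h2 : ∫ z in Ioi (1.415:ℝ), phi z ≤ ∫ z in Ioi (0:ℝ), phi z := by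
    apply setIntegral_mono_set phi_integrable.integrableOn
      (ae_of_all _ fun z => (phi_pos z).le)
    exact HasSubset.Subset.eventuallyLE (Ioi_subset_Ioi (by norm_num))
  have := tail_num
  linarith

lemma exists_Phi_eq {p : ℝ} (h0 : Phi 0 ≤ p) (h1 : p < 1) : ∃ t, 0 ≤ t ∧ Phi t = p := by
  set T : ℝ := max 1 (1 - p)⁻¹ with hT
  have hT1 : (1:ℝ) ≤ T := le_max_left _ _
  have hTp : (1 - p)⁻¹ ≤ T := le_max_right _ _
  have hTpos : (0:ℝ) < T := by linarith
  have h1p : (0:ℝ) < 1 - p := by linarith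
  have htail : ∫ z in Ioi T, phi z ≤ 1 - p := by
    calc ∫ z in Ioi T, phi z ≤ phi T / T := tail_ub hTpos
      _ ≤ 1 / T := by
          gcongr
          exact phi_le_one T
      _ ≤ 1 - p := by
          rw [div_le_iff₀ hTpos]
          calc (1:ℝ) = (1-p) * (1-p)⁻¹ := by field_simp
            _ ≤ (1-p) * T := by nlinarith
  have hPhiT : p ≤ Phi T := by
    have := Phi_add_tail T
    linarith
  have hmem : p ∈ Icc (Phi 0) (Phi T) := ⟨h0, hPhiT⟩
  have := intermediate_value_Icc hTpos.le Phi_cont.continuousOn hmem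
  obtain ⟨t, ht, htp⟩ := this
  exact ⟨t, ht.1, htp⟩

/-- For `g(α) = φ(Φ⁻¹(1-α))`, `α + Δ < 0.05`, `0 < Δ ≤ 4α`:
`(1/2) Δ Φ⁻¹(1-α) ≤ g(α+Δ) - g(α) ≤ Δ Φ⁻¹(1-α)`. -/
theorem access_expansion_bounds (α Δ : ℝ) (hα : 0 < α) (hΔ : 0 < Δ)
    (hsum : α + Δ < 0.05) (hΔα : Δ ≤ 4 * α) :
    (1 / 2) * Δ * Phiinv (1 - α) ≤
        phi (Phiinv (1 - (α + Δ))) - phi (Phiinv (1 - α)) ∧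
      phi (Phiinv (1 - (α + Δ))) - phi (Phiinv (1 - α)) ≤ Δ * Phiinv (1 - α) := by
  have hα05 : α < 0.05 := by linarith
  obtain ⟨x, hx0, hxΦ⟩ := exists_Phi_eq (p := 1 - α)
    (by have := Phi_zero_le; linarith) (by linarith)
  obtain ⟨y, hy0, hyΦ⟩ := exists_Phi_eq (p := 1 - (α + Δ))
    (by have := Phi_zero_le; linarith) (by linarith)
  rw [Phiinv_eq hxΦ, Phiinv_eq hyΦ]
  have hyx : y < x := by
    have h : Phi y < Phi x := by rw [hxΦ, hyΦ]; linarith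
    exact Phi_strictMono.lt_iff_lt.1 h
  have hy14 : (1.415 : ℝ) ≤ y := by
    by_contra h
    push_neg at h
    have h1 : Phi y ≤ Phi 1.415 := Phi_strictMono.monotone h.le
    have h2 : Phi 1.415 ≤ 0.95 := by
      have ha := Phi_add_tail 1.415
      have hb := tail_num
      linarith
    rw [hyΦ] at h1
    linarith
  have hypos : (0:ℝ) < y := by linarith
  -- x ≤ 2 y
  have hx2y : x ≤ 2 * y := by
    by_contra h
    push_neg at h
    -- Δ ≥ y * phi (2y)
    have hΔlb : y * phi (2 * y) ≤ Δ := by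
      have h1 : Phi (2*y) - Phi y ≤ Phi x - Phi y := by
        have := Phi_strictMono.monotone h.le
        linarith
      have h2 : Phi x - Phi y = Δ := by rw [hxΦ, hyΦ]; ring
      have h3 : Phi (2*y) - Phi y = ∫ t in y..(2*y), phi t := Phi_sub
      have h4 : ∫ t in y..(2*y), (fun _ => phi (2*y)) t ≤ ∫ t in y..(2*y), phi t := by
        apply intervalIntegral.integral_mono_on (by linarith)
          (by apply intervalIntegrable_const)
          (phi_integrable.intervalIntegrable)
        intro t ht
        exact phi_anti (by linarith [ht.1]) ht.2
      rw [intervalIntegral.integral_const] at h4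
      have h5 : (2*y - y) • phi (2*y) = y * phi (2*y) := by
        rw [smul_eq_mul]; ring
      rw [h5] at h4
      linarith
    -- α ≤ phi (2y) / (2y)
    have hαub : α ≤ phi (2*y) / (2*y) := by
      have h1 : α = ∫ z in Ioi x, phi z := by
        have := Phi_add_tail x
        rw [hxΦ] at this
        linarith
      have h2 : ∫ z in Ioi x, phi z ≤ phi x / x := tail_ub (by linarith)
      have h3 : phi x ≤ phi (2*y) := phi_anti (by linarith) h.le
      have h4 : phi x / x ≤ phi (2*y) / (2*y) := by
        apply div_le_div₀ (phi_pos _).le h3 (by linarith) h.le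
      linarith
    -- contradiction: y^2 ≤ 2 but y ≥ 1.415
    have hφpos := phi_pos (2*y)
    have h2y : (0:ℝ) < 2*y := by linarith
    rw [le_div_iff₀ h2y] at hαub
    nlinarith [mul_le_mul_of_nonneg_right hΔlb h2y.le,
      mul_le_mul_of_nonneg_right hΔα h2y.le, hαub, hφpos, hy14]
  -- key equalities
  have hD : Δ = ∫ t in y..x, phi t := by
    have h1 : Phi x - Phi y = ∫ t in y..x, phi t := Phi_sub
    rw [hxΦ, hyΦ] at h1
    linarith
  have hFTC : phi y - phi x = ∫ t in y..x, t * phi t := by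
    have h := intervalIntegral.integral_eq_sub_of_hasDerivAt
      (f := fun t => -phi t) (f' := fun t => t * phi t) (a := y) (b := x)
      (fun t _ => by have := (phi_hasDeriv t).neg; rw [neg_neg] at this; exact this)
      ((continuous_id.mul phi_cont).intervalIntegrable y x)
    rw [h]; ring
  have hxpos : (0:ℝ) < x := by linarith
  constructor
  · -- lower bound
    have h1 : ∫ t in y..x, (fun t => (x/2) * phi t) t ≤ ∫ t in y..x, t * phi t := by
      apply intervalIntegral.integral_mono_on hyx.le
        ((phi_integrable.intervalIntegrable).const_mul _)
        ((continuous_id.mul phi_cont).intervalIntegrable y x)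
      intro t ht
      simp only [Pi.mul_apply, id_eq]
      have : x / 2 ≤ t := by linarith [ht.1]
      nlinarith [phi_pos t]
    rw [intervalIntegral.integral_const_mul] at h1
    rw [← hD] at h1
    rw [← hFTC] at h1
    linarith
  · -- upper bound
    have h1 : ∫ t in y..x, t * phi t ≤ ∫ t in y..x, (fun t => x * phi t) t := by
      apply intervalIntegral.integral_mono_on hyx.le
        ((continuous_id.mul phi_cont).intervalIntegrable y x)
        ((phi_integrable.intervalIntegrable).const_mul _)
      intro t ht
      simp only [Pi.mul_apply, id_eq]
      nlinarith [phi_pos t, ht.2]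
    rw [intervalIntegral.integral_const_mul, ← hD, ← hFTC] at h1
    linarith
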